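/- Let λ (length n) and μ (length n-2) be weakly decreasing sequences of nonnegative integers with μ doubly interlacing λ. Suppose additionally that the concatenated multiset {λ_i} ∪ {μ_j} has all 2n-2 entries distinct. Then there is a unique word w of length n-1 in the arrows {↘, ⇀, ⇁, ↗} (with the top/bottom state rules) such that the tiling determined by w, with pattern-block entries given by the weakly decreasing rearrangement (x₁,z₁,...,x_{n-1},z_{n-1}), places exactly the entries of λ on the top row and exactly the entries of μ on the bottom row. -/

import Mathlib

/-- `a` is a weakly decreasing sequence of length `k` (entries `a 0, …, a (k-1)`). -/
def WeaklyDecr (k : ℕ) (a : ℕ → ℤ) : Prop :=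
  ∀ i : ℕ, i + 1 < k → a (i + 1) ≤ a i

/-- The entries `a 0, …, a (k-1)` are nonnegative. -/
def NonnegSeq (k : ℕ) (a : ℕ → ℤ) : Prop :=
  ∀ i : ℕ, i < k → 0 ≤ a i

/-- `Interlaces k β α` : the length-`(k-1)` sequence `β` interlaces the length-`k`
sequence `α`, i.e. `α 0 ≥ β 0 ≥ α 1 ≥ β 1 ≥ ⋯ ≥ β (k-2) ≥ α (k-1)`. -/
def Interlaces (k : ℕ) (β α : ℕ → ℤ) : Prop :=
  ∀ i : ℕ, i + 1 < k → β i ≤ α i ∧ α (i + 1) ≤ β i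

/-- `μ` (length `n-2`) doubly interlaces `lam` (length `n`):
there is a weakly decreasing `κ` of length `n-1` with `μ ⊑ κ ⊑ lam`. -/
def DoublyInterlaces (n : ℕ) (μ lam : ℕ → ℤ) : Prop :=
  ∃ κ : ℕ → ℤ, WeaklyDecr (n - 1) κ ∧ Interlaces n κ lam ∧ Interlaces (n - 1) μ κ

/-- `s` is the weakly decreasing rearrangement
`(x₁, z₁, …, x_{n-1}, z_{n-1})` (with `x j = s (2*j)`, `z j = s (2*j+1)` in 0-based
indexing) of the concatenation of `lam` (length `n`) and `μ` (length `n-2`). -/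
def Rearr (n : ℕ) (lam μ s : ℕ → ℤ) : Prop :=
  WeaklyDecr (2 * n - 2) s ∧
    ((List.range (2 * n - 2)).map s).Perm
      (((List.range n).map lam) ++ ((List.range (n - 2)).map μ))

/-- The four arrows: down-right `↘`, harpoon-up `⇀`, harpoon-down `⇁`,
up-right `↗`. -/
inductive Arrow : Type
  | dr | hu | hd | ur
deriving DecidableEq

/-- The line on which an arrow starts (`true` = top line `y = 0`). -/
def startRow : Arrow → Bool
  | .dr => true
  | .hu => true
  | .hd => false
  | .ur => false

/-- The line on which an arrow ends (`true` = top line `y = 0`). -/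
def endRow : Arrow → Bool
  | .dr => false
  | .hu => true
  | .hd => false
  | .ur => true

/-- Entry access for a length-`k` word, with default `⇀` out of range. -/
def aget {k : ℕ} (a : Fin k → Arrow) (i : ℕ) : Arrow :=
  if h : i < k then a ⟨i, h⟩ else Arrow.hu

/-! ### Auxiliary material for `stmt_18` -/

/-- Build an arrow from its start row and end row. -/
def mkArrow : Bool → Bool → Arrow
  | true, true => .hu
  | true, false => .dr
  | false, true => .ur
  | false, false => .hd

theorem startRow_mkArrow (b c : Bool) : startRow (mkArrow b c) = b := by
  cases b <;> cases c <;> rfl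

theorem endRow_mkArrow (b c : Bool) : endRow (mkArrow b c) = c := by
  cases b <;> cases c <;> rfl

theorem arrow_ext {x y : Arrow} (h1 : startRow x = startRow y)
    (h2 : endRow x = endRow y) : x = y := by
  cases x <;> cases y <;> simp_all [startRow, endRow]

theorem range_two_mul_perm (m : ℕ) :
    (List.range (2 * m)).Perm
      ((List.range m).map (fun i => 2 * i) ++ (List.range m).map (fun i => 2 * i + 1)) := by
  refine (List.perm_ext_iff_of_nodup List.nodup_range ?_).2 ?_
  · refine List.nodup_append.2 ⟨?_, ?_, ?_⟩
    · exact (List.nodup_map_iff_inj_on List.nodup_range).2 (by intro x _ y _ h; omega)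
    · exact (List.nodup_map_iff_inj_on List.nodup_range).2 (by intro x _ y _ h; omega)
    · intro a ha b hb
      simp only [List.mem_map, List.mem_range] at ha hb
      obtain ⟨x, _, rfl⟩ := ha
      obtain ⟨y, _, rfl⟩ := hb
      omega
  · intro a
    simp only [List.mem_append, List.mem_map, List.mem_range]
    constructor
    · intro h
      rcases Nat.even_or_odd a with ⟨i, hi⟩ | ⟨i, hi⟩
      · exact Or.inl ⟨i, by omega, by omega⟩
      · exact Or.inr ⟨i, by omega, by omega⟩
    · rintro (⟨i, hi, rfl⟩ | ⟨i, hi, rfl⟩) <;> omega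

theorem weaklyDecr_mono {k : ℕ} {f : ℕ → ℤ} (hf : WeaklyDecr k f) :
    ∀ i j : ℕ, i ≤ j → j < k → f j ≤ f i := by
  intro i j
  induction j with
  | zero =>
    intro h1 _
    have : i = 0 := by omega
    subst this; exact le_refl _
  | succ j ih =>
    intro hij hj
    rcases Nat.lt_or_ge i (j + 1) with h | h
    · exact (hf j hj).trans (ih (by omega) (by omega))
    · have : i = j + 1 := by omega
      subst this; exact le_refl _

theorem count_ge_iff (m : ℕ) (f : ℕ → ℤ) (hf : ∀ i j : ℕ, i ≤ j → j < m → f j ≤ f i)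
    (v : ℤ) (i : ℕ) (him : i < m) :
    i + 1 ≤ (((List.range m).map f).filter (fun x => decide (v ≤ x))).length ↔ v ≤ f i := by
  constructor
  · intro h
    by_contra hv
    push_neg at hv
    have hsplit : List.range m = List.range i ++ (List.range (m - i)).map (fun x => i + x) := by
      rw [← List.range_add]; congr 1; omega
    rw [hsplit, List.map_append, List.filter_append, List.length_append] at h
    have h2 : (((List.range (m - i)).map (fun x => i + x)).map f).filter
        (fun x => decide (v ≤ x)) = [] := by
      rw [List.filter_eq_nil_iff]
      intro a ha
      simp only [List.map_map, List.mem_map, List.mem_range, Function.comp_apply] at ha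
      obtain ⟨x, hx, rfl⟩ := ha
      have h3 := hf i (i + x) (Nat.le_add_right _ _) (by omega)
      simp only [decide_eq_true_eq]
      intro hva
      exact absurd (hva.trans h3) (not_le.2 hv)
    rw [h2] at h
    have h4 := List.length_filter_le (fun x => decide (v ≤ x)) ((List.range i).map f)
    simp only [List.length_map, List.length_range, List.length_nil] at h h4
    omega
  · intro hv
    have hsplit : List.range m
        = List.range (i + 1) ++ (List.range (m - (i + 1))).map (fun x => (i + 1) + x) := by
      rw [← List.range_add]; congr 1; omega
    rw [hsplit, List.map_append, List.filter_append, List.length_append]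
    have h2 : ((List.range (i + 1)).map f).filter (fun x => decide (v ≤ x))
        = (List.range (i + 1)).map f := by
      rw [List.filter_eq_self]
      intro a ha
      simp only [List.mem_map, List.mem_range] at ha
      obtain ⟨x, hx, rfl⟩ := ha
      simp only [decide_eq_true_eq]
      exact hv.trans (hf x i (by omega) him)
    rw [h2]
    simp only [List.length_map, List.length_range]
    omega

/-- If the `2n-2` entries of `λ` and `μ` are all distinct, there is a unique
word `w` of length `n-1` in the arrows `{↘, ⇀, ⇁, ↗}` (starting on the top line,
with consecutive arrows on opposite lines at each shared column, ending on the
top line) whose tiling — block `i` placing `x_i = s(2i)` on the start row and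
`z_i = s(2i+1)` on the end row — puts exactly the entries of `λ` on the top row
and exactly the entries of `μ` on the bottom row. -/
theorem stmt_18 (n : ℕ) (hn : 2 ≤ n) (lam mu s : ℕ → ℤ)
    (hlam : WeaklyDecr n lam) (hlam0 : NonnegSeq n lam)
    (hmu : WeaklyDecr (n - 2) mu) (hmu0 : NonnegSeq (n - 2) mu)
    (hd : DoublyInterlaces n mu lam)
    (hs : Rearr n lam mu s)
    (hdist : (((List.range n).map lam) ++ ((List.range (n - 2)).map mu)).Nodup) :
    ∃! a : Fin (n - 1) → Arrow,
      (startRow (aget a 0) = true ∧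
        (∀ i : ℕ, i + 1 < n - 1 → startRow (aget a (i + 1)) = !endRow (aget a i)) ∧
        endRow (aget a (n - 2)) = true) ∧
      ((((List.range (n - 1)).filter (fun i => startRow (aget a i))).map
            (fun i => s (2 * i)) ++
          ((List.range (n - 1)).filter (fun i => endRow (aget a i))).map
            (fun i => s (2 * i + 1))).Perm
        ((List.range n).map lam)) ∧
      ((((List.range (n - 1)).filter (fun i => !startRow (aget a i))).map
            (fun i => s (2 * i)) ++
          ((List.range (n - 1)).filter (fun i => !endRow (aget a i))).map
            (fun i => s (2 * i + 1))).Perm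
        ((List.range (n - 2)).map mu)) := by
  obtain ⟨κ, hκd, hκl, hμκ⟩ := hd
  obtain ⟨hsd, hperm⟩ := hs
  set L := (List.range n).map lam with hL
  set M := (List.range (n - 2)).map mu with hM
  have hnods : ((List.range (2 * n - 2)).map s).Nodup := hperm.nodup_iff.2 hdist
  have hdisj : ∀ x, x ∈ L → x ∉ M := fun x hx hy => (List.nodup_append.1 hdist).2.2 x hx x hy rfl
  have hmem : ∀ j, j < 2 * n - 2 → s j ∈ L ∨ s j ∈ M := by
    intro j hj
    have h1 : s j ∈ (List.range (2 * n - 2)).map s :=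
      List.mem_map_of_mem (f := s) (List.mem_range.2 hj)
    have h2 := hperm.mem_iff.1 h1
    simpa [List.mem_append] using h2
  have smono := weaklyDecr_mono hsd
  have Lmono := weaklyDecr_mono hlam
  have Mmono := weaklyDecr_mono hmu
  have sinj : ∀ i j, i < 2 * n - 2 → j < 2 * n - 2 → s i = s j → i = j := by
    intro i j hi hj hij
    exact (List.nodup_map_iff_inj_on List.nodup_range).1 hnods i
      (List.mem_range.2 hi) j (List.mem_range.2 hj) hij
  have sstrict : ∀ i j, i < j → j < 2 * n - 2 → s j < s i := by
    intro i j hij hj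
    rcases lt_or_eq_of_le (smono i j (le_of_lt hij) hj) with h | h
    · exact h
    · exact absurd (sinj i j (by omega) hj h.symm) (by omega)
  -- interlacing consequences
  have hml : ∀ k, k < n - 2 → mu k ≤ lam k := fun k hk =>
    le_trans (hμκ k (by omega)).1 (hκl k (by omega)).1
  have hlm : ∀ k, 1 ≤ k → k ≤ n - 2 → lam (k + 1) ≤ mu (k - 1) := by
    intro k h1 h2
    have ha := (hκl k (by omega)).2
    have hb := (hμκ (k - 1) (by omega)).2
    rw [show k - 1 + 1 = k by omega] at hb
    exact ha.trans hb
  -- Step 1 : the entries `≥ s (2k)` are exactly the first `2k+1` entries of `s`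
  have step1 : ∀ k, k ≤ n - 2 →
      ((List.range (2 * n - 2)).map s).filter (fun x => decide (s (2 * k) ≤ x))
        = (List.range (2 * k + 1)).map s := by
    intro k hk
    have hsplit : List.range (2 * n - 2)
        = List.range (2 * k + 1)
          ++ (List.range (2 * n - 2 - (2 * k + 1))).map (fun x => (2 * k + 1) + x) := by
      rw [← List.range_add]; congr 1; omega
    rw [hsplit, List.map_append, List.filter_append]
    have h1 : ((List.range (2 * k + 1)).map s).filter (fun x => decide (s (2 * k) ≤ x))
        = (List.range (2 * k + 1)).map s := by
      rw [List.filter_eq_self]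
      intro a ha
      simp only [List.mem_map, List.mem_range] at ha
      obtain ⟨x, hx, rfl⟩ := ha
      simp only [decide_eq_true_eq]
      exact smono x (2 * k) (by omega) (by omega)
    have h2 : (((List.range (2 * n - 2 - (2 * k + 1))).map (fun x => (2 * k + 1) + x)).map
        s).filter (fun x => decide (s (2 * k) ≤ x)) = [] := by
      rw [List.filter_eq_nil_iff]
      intro a ha
      simp only [List.map_map, List.mem_map, List.mem_range, Function.comp_apply] at ha
      obtain ⟨x, hx, rfl⟩ := ha
      simp only [decide_eq_true_eq]
      exact not_le.2 (sstrict (2 * k) (2 * k + 1 + x) (by omega) (by omega))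
    rw [h1, h2, List.append_nil]
  -- Step 2 : count of large entries in L and M
  have hAB : ∀ k, k ≤ n - 2 →
      (L.filter (fun x => decide (s (2 * k) ≤ x))).length
        + (M.filter (fun x => decide (s (2 * k) ≤ x))).length = 2 * k + 1 := by
    intro k hk
    have hlen := (hperm.filter (fun x => decide (s (2 * k) ≤ x))).length_eq
    rw [step1 k hk, List.filter_append, List.length_append] at hlen
    simp only [List.length_map, List.length_range] at hlen
    omega
  have hMlen : M.length = n - 2 := by rw [hM]; simp
  -- Step 3 : exactly k entries of M are ≥ s (2k)
  have hB : ∀ k, k ≤ n - 2 →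
      (M.filter (fun x => decide (s (2 * k) ≤ x))).length = k := by
    intro k hk
    have hab := hAB k hk
    have hBlen : (M.filter (fun x => decide (s (2 * k) ≤ x))).length ≤ n - 2 :=
      le_trans (List.length_filter_le _ _) (le_of_eq hMlen)
    have hBle : (M.filter (fun x => decide (s (2 * k) ≤ x))).length ≤ k := by
      by_contra hc
      push_neg at hc
      have hk3 : k < n - 2 := by omega
      have hmuk : s (2 * k) ≤ mu k := by
        have := (count_ge_iff (n - 2) mu Mmono (s (2 * k)) k hk3).1
        rw [← hM] at this
        exact this (by omega)
      have hlamk : s (2 * k) ≤ lam k := le_trans hmuk (hml k hk3)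
      have hA : k + 1 ≤ (L.filter (fun x => decide (s (2 * k) ≤ x))).length := by
        have := (count_ge_iff n lam Lmono (s (2 * k)) k (by omega)).2 hlamk
        rw [← hL] at this
        exact this
      omega
    have hBge : k ≤ (M.filter (fun x => decide (s (2 * k) ≤ x))).length := by
      rcases Nat.eq_zero_or_pos k with rfl | hk0
      · exact Nat.zero_le _
      by_contra hc
      push_neg at hc
      have hA2 : k + 2 ≤ (L.filter (fun x => decide (s (2 * k) ≤ x))).length := by omega
      have hlamk1 : s (2 * k) ≤ lam (k + 1) := by
        have := (count_ge_iff n lam Lmono (s (2 * k)) (k + 1) (by omega)).1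
        rw [← hL] at this
        exact this (by omega)
      have hmuk1 : s (2 * k) ≤ mu (k - 1) := hlamk1.trans (hlm k hk0 hk)
      have := (count_ge_iff (n - 2) mu Mmono (s (2 * k)) (k - 1) (by omega)).2 hmuk1
      rw [← hM] at this
      omega
    omega
  -- Step 4 : among the top 2k+1 entries of s, exactly k are in M
  have hc : ∀ k, k ≤ n - 2 →
      (((List.range (2 * k + 1)).map s).filter (fun x => decide (x ∈ M))).length = k := by
    intro k hk
    rw [← step1 k hk]
    have hpe := ((hperm.filter (fun x => decide (s (2 * k) ≤ x))).filter
      (fun x => decide (x ∈ M))).length_eq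
    rw [List.filter_append, List.filter_append, List.length_append] at hpe
    have e1 : (L.filter (fun x => decide (s (2 * k) ≤ x))).filter
        (fun x => decide (x ∈ M)) = [] := by
      rw [List.filter_eq_nil_iff]
      intro a ha
      have : a ∈ L := List.mem_of_mem_filter ha
      simp [hdisj a this]
    have e2 : (M.filter (fun x => decide (s (2 * k) ≤ x))).filter
        (fun x => decide (x ∈ M)) = M.filter (fun x => decide (s (2 * k) ≤ x)) := by
      rw [List.filter_eq_self]
      intro a ha
      have : a ∈ M := List.mem_of_mem_filter ha
      simpa using this
    rw [e1, e2] at hpe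
    simp only [List.length_nil, Nat.zero_add] at hpe
    rw [hpe]
    exact hB k hk
  have htot : ∀ j, j < 2 * n - 2 → (s j ∈ L ↔ ¬(s j ∈ M)) := by
    intro j hj
    constructor
    · exact fun h => hdisj _ h
    · intro h
      rcases hmem j hj with h1 | h1
      · exact h1
      · exact absurd h1 h
  -- the forced row of the largest entry
  have ht0 : s 0 ∈ L := by
    by_cases h : s 0 ∈ M
    · exfalso
      have h1 := hc 0 (by omega)
      simp [List.range_succ, h] at h1
    · exact (htot 0 (by omega)).2 h
  -- total number of entries lying in M
  have htotM : (((List.range (2 * n - 2)).map s).filter (fun x => decide (x ∈ M))).length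
      = n - 2 := by
    have h1 := (hperm.filter (fun x => decide (x ∈ M))).length_eq
    rw [List.filter_append] at h1
    have e1 : L.filter (fun x => decide (x ∈ M)) = [] :=
      List.filter_eq_nil_iff.2 (by intro a ha; simp [hdisj a ha])
    have e2 : M.filter (fun x => decide (x ∈ M)) = M :=
      List.filter_eq_self.2 (by intro a ha; simpa using ha)
    rw [e1, e2] at h1
    simpa [hMlen] using h1
  -- the forced row of the smallest entry
  have htlast : s (2 * n - 3) ∈ L := by
    have h1 := hc (n - 2) (le_refl _)
    rw [show 2 * (n - 2) + 1 = 2 * n - 3 by omega] at h1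
    have hsplit : List.range (2 * n - 2) = List.range (2 * n - 3) ++ [2 * n - 3] := by
      rw [show 2 * n - 2 = (2 * n - 3) + 1 by omega, List.range_succ]
    have h2 := htotM
    rw [hsplit, List.map_append, List.filter_append, List.length_append, h1] at h2
    by_cases h : s (2 * n - 3) ∈ M
    · exfalso
      simp [h] at h2
    · exact (htot _ (by omega)).2 h
  -- the forced alternation across column boundaries
  have hpair : ∀ i, i + 1 < n - 1 → ((s (2 * i + 1) ∈ M) ↔ ¬(s (2 * i + 2) ∈ M)) := by
    intro i hi
    have h1 := hc i (by omega)
    have h2 := hc (i + 1) (by omega)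
    have hsplit : List.range (2 * (i + 1) + 1)
        = List.range (2 * i + 1) ++ [2 * i + 1, 2 * i + 2] := by
      rw [show 2 * (i + 1) + 1 = (2 * i + 1) + 2 by omega, List.range_add]
      rfl
    rw [hsplit, List.map_append, List.filter_append, List.length_append, h1] at h2
    by_cases ha : s (2 * i + 1) ∈ M <;> by_cases hb : s (2 * i + 2) ∈ M
    · exfalso
      simp [ha, hb] at h2
    · simp [ha, hb]
    · simp [ha, hb]
    · exfalso
      simp [ha, hb] at h2
  -- the forced row pattern
  set t : ℕ → Bool := fun j => decide (s j ∈ L) with ht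
  -- assembling the two halves of a tiling row
  have assemble : ∀ g : ℕ → Bool,
      ((((List.range (n - 1)).filter (fun i => g (2 * i))).map (fun i => s (2 * i))) ++
        (((List.range (n - 1)).filter (fun i => g (2 * i + 1))).map
          (fun i => s (2 * i + 1)))).Perm
        (((List.range (2 * n - 2)).filter g).map s) := by
    intro g
    have h1 : (((List.range (n - 1)).map (fun i => 2 * i)).filter g).map s
        = ((List.range (n - 1)).filter (fun i => g (2 * i))).map (fun i => s (2 * i)) := by
      rw [List.filter_map, List.map_map]
      rfl
    have h2 : (((List.range (n - 1)).map (fun i => 2 * i + 1)).filter g).map s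
        = ((List.range (n - 1)).filter (fun i => g (2 * i + 1))).map
          (fun i => s (2 * i + 1)) := by
      rw [List.filter_map, List.map_map]
      rfl
    rw [← h1, ← h2, ← List.map_append, ← List.filter_append]
    refine List.Perm.map s (List.Perm.filter g ?_)
    have h3 := (range_two_mul_perm (n - 1)).symm
    rwa [show 2 * (n - 1) = 2 * n - 2 by omega] at h3
  -- the top row of the canonical tiling is L
  have hLperm : (((List.range (2 * n - 2)).filter t).map s).Perm L := by
    have hLt : ((List.range (2 * n - 2)).filter t).map s
        = ((List.range (2 * n - 2)).map s).filter (fun x => decide (x ∈ L)) := by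
      rw [List.filter_map]
      rfl
    rw [hLt]
    have h1 := hperm.filter (fun x => decide (x ∈ L))
    rw [List.filter_append] at h1
    have e1 : L.filter (fun x => decide (x ∈ L)) = L :=
      List.filter_eq_self.2 (by intro a ha; simpa using ha)
    have e2 : M.filter (fun x => decide (x ∈ L)) = [] :=
      List.filter_eq_nil_iff.2 (by intro a ha; simp; exact fun h => hdisj a h ha)
    rw [e1, e2, List.append_nil] at h1
    exact h1
  -- the bottom row of the canonical tiling is M
  have hMperm : (((List.range (2 * n - 2)).filter (fun j => !t j)).map s).Perm M := by
    have hMt : ((List.range (2 * n - 2)).filter (fun j => !t j)).map s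
        = ((List.range (2 * n - 2)).map s).filter (fun x => !decide (x ∈ L)) := by
      rw [List.filter_map]
      rfl
    rw [hMt]
    have h1 := hperm.filter (fun x => !decide (x ∈ L))
    rw [List.filter_append] at h1
    have e1 : L.filter (fun x => !decide (x ∈ L)) = [] :=
      List.filter_eq_nil_iff.2 (by intro a ha; simp [ha])
    have e2 : M.filter (fun x => !decide (x ∈ L)) = M :=
      List.filter_eq_self.2 (by intro a ha; simp; exact fun h => hdisj a h ha)
    rw [e1, e2, List.nil_append] at h1
    exact h1
  -- the canonical word
  obtain ⟨A, hA⟩ : ∃ A : Fin (n - 1) → Arrow,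
      ∀ i : Fin (n - 1), A i = mkArrow (t (2 * i.val)) (t (2 * i.val + 1)) :=
    ⟨_, fun i => rfl⟩
  have haget : ∀ i : ℕ, i < n - 1 → aget A i = mkArrow (t (2 * i)) (t (2 * i + 1)) := by
    intro i hi
    unfold aget
    rw [dif_pos hi, hA]
  refine ⟨A, ⟨⟨?_, ?_, ?_⟩, ?_, ?_⟩, ?_⟩
  · -- starts on top
    rw [haget 0 (by omega), startRow_mkArrow, show 2 * 0 = 0 by omega, ht]
    simpa using ht0
  · -- alternation
    intro i hi
    rw [haget (i + 1) (by omega), haget i (by omega), startRow_mkArrow, endRow_mkArrow]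
    have hp := hpair i hi
    have hAiff := htot (2 * i + 1) (by omega)
    have hBiff := htot (2 * i + 2) (by omega)
    rw [show 2 * (i + 1) = 2 * i + 2 by omega]
    have g1 : s (2 * i + 1) ∈ L ↔ ¬(s (2 * i + 2) ∈ L) := by
      rw [hAiff, hBiff]
      tauto
    by_cases hx : s (2 * i + 1) ∈ L
    · have hy : ¬ s (2 * i + 2) ∈ L := g1.1 hx
      simp [ht, hx, hy]
    · have hy : s (2 * i + 2) ∈ L := by tauto
      simp [ht, hx, hy]
  · -- ends on top
    rw [haget (n - 2) (by omega), endRow_mkArrow, show 2 * (n - 2) + 1 = 2 * n - 3 by omega,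
      ht]
    simpa using htlast
  · -- top row is L
    have e1 : (List.range (n - 1)).filter (fun i => startRow (aget A i))
        = (List.range (n - 1)).filter (fun i => t (2 * i)) :=
      List.filter_congr (by
        intro x hx
        rw [haget x (List.mem_range.1 hx), startRow_mkArrow])
    have e2 : (List.range (n - 1)).filter (fun i => endRow (aget A i))
        = (List.range (n - 1)).filter (fun i => t (2 * i + 1)) :=
      List.filter_congr (by
        intro x hx
        rw [haget x (List.mem_range.1 hx), endRow_mkArrow])
    rw [e1, e2]
    exact (assemble t).trans hLperm
  · -- bottom row is M
    have e1 : (List.range (n - 1)).filter (fun i => !startRow (aget A i))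
        = (List.range (n - 1)).filter (fun i => !t (2 * i)) :=
      List.filter_congr (by
        intro x hx
        rw [haget x (List.mem_range.1 hx), startRow_mkArrow])
    have e2 : (List.range (n - 1)).filter (fun i => !endRow (aget A i))
        = (List.range (n - 1)).filter (fun i => !t (2 * i + 1)) :=
      List.filter_congr (by
        intro x hx
        rw [haget x (List.mem_range.1 hx), endRow_mkArrow])
    rw [e1, e2]
    exact (assemble (fun j => !t j)).trans hMperm
  · -- uniqueness
    rintro b ⟨-, hbtop, hbbot⟩
    set u : ℕ → Bool := fun j =>
      if j % 2 = 0 then startRow (aget b (j / 2)) else endRow (aget b (j / 2)) with hu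
    have hustart : ∀ i : ℕ, u (2 * i) = startRow (aget b i) := by
      intro i
      have e1 : (2 * i) % 2 = 0 := by omega
      have e2 : 2 * i / 2 = i := by omega
      simp [hu, e1, e2]
    have huend : ∀ i : ℕ, u (2 * i + 1) = endRow (aget b i) := by
      intro i
      have e1 : (2 * i + 1) % 2 = 1 := by omega
      have e2 : (2 * i + 1) / 2 = i := by omega
      simp [hu, e1, e2]
    have hbtop' : (((List.range (2 * n - 2)).filter u).map s).Perm L := by
      have e1 : (List.range (n - 1)).filter (fun i => startRow (aget b i))
          = (List.range (n - 1)).filter (fun i => u (2 * i)) :=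
        List.filter_congr (fun x _ => (hustart x).symm)
      have e2 : (List.range (n - 1)).filter (fun i => endRow (aget b i))
          = (List.range (n - 1)).filter (fun i => u (2 * i + 1)) :=
        List.filter_congr (fun x _ => (huend x).symm)
      rw [e1, e2] at hbtop
      exact (assemble u).symm.trans hbtop
    have hbbot' : (((List.range (2 * n - 2)).filter (fun j => !u j)).map s).Perm M := by
      have e1 : (List.range (n - 1)).filter (fun i => !startRow (aget b i))
          = (List.range (n - 1)).filter (fun i => !u (2 * i)) :=
        List.filter_congr (fun x _ => by rw [hustart x])
      have e2 : (List.range (n - 1)).filter (fun i => !endRow (aget b i))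
          = (List.range (n - 1)).filter (fun i => !u (2 * i + 1)) :=
        List.filter_congr (fun x _ => by rw [huend x])
      rw [e1, e2] at hbbot
      exact (assemble (fun j => !u j)).symm.trans hbbot
    have hut : ∀ j, j < 2 * n - 2 → u j = t j := by
      intro j hj
      cases hcase : u j with
      | false =>
        have hm : s j ∈ ((List.range (2 * n - 2)).filter (fun j => !u j)).map s :=
          List.mem_map_of_mem (f := s)
            (List.mem_filter.2 ⟨List.mem_range.2 hj, by simp [hcase]⟩)
        have hM' : s j ∈ M := hbbot'.subset hm
        have hnL : ¬ s j ∈ L := fun h => hdisj _ h hM'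
        rw [ht]
        simp [hnL]
      | true =>
        have hm : s j ∈ ((List.range (2 * n - 2)).filter u).map s :=
          List.mem_map_of_mem (f := s) (List.mem_filter.2 ⟨List.mem_range.2 hj, hcase⟩)
        have hL' : s j ∈ L := hbtop'.subset hm
        rw [ht]
        simp [hL']
    funext i
    have hi := i.isLt
    have hib : aget b i.val = b i := by
      unfold aget
      rw [dif_pos i.isLt]
    apply arrow_ext
    · rw [← hib, ← hustart i.val, hut (2 * i.val) (by omega), hA, startRow_mkArrow]
    · rw [← hib, ← huend i.val, hut (2 * i.val + 1) (by omega), hA, endRow_mkArrow]
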